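/- Assume A = S/𝔞 satisfies: Tor_i^A(k,k)_α has dimension equal to the number of pairs (J, u) with J ⊆ [n], u a monomial of the ring R, |J| + |u| = i and α_J + deg(u) = α (Conjecture P on the minimal resolution). Then the multigraded Poincaré–Betti series of A equals Π_{i=1}^n (1 + x_i t) · Hilb_R(x, 1, t), where Hilb_R is the multigraded Hilbert series of R. -/

import Mathlib

/-!
STATEMENT 7: Suppose the multigraded deviations of `A` satisfy Conjecture (P):
`dim_k Tor_i^A(k,k)_α` equals the number of pairs `(J, u)` with `J ⊆ [n]`, `u` a
monomial of the ring `R`, `|J| + |u| = i` and `α_J + deg u = α`.  Then the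
multigraded Poincaré–Betti series of `A` equals
`Π_{i=1}^n (1 + x_i t) · Hilb_R(x, 1, t)`.

The monomials of `R` are abstracted as a type `U` with a multidegree `mdeg` and
a homological degree `hdeg`; `T i α = dim_k Tor_i^A(k,k)_α` is abstracted as a
function.  Series are encoded in `MvPowerSeries (Fin n ⊕ Unit) ℚ`, the extra
variable being `t`.
-/

noncomputable section

variable {n : ℕ}

/-- encode a pair (multidegree, homological degree) as an exponent vector. -/
def emb (α : Fin n →₀ ℕ) (i : ℕ) : (Fin n ⊕ Unit) →₀ ℕ :=
  Finsupp.mapDomain Sum.inl α + Finsupp.single (Sum.inr ()) i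

/-- the multidegree part of an exponent vector. -/
def dec (e : (Fin n ⊕ Unit) →₀ ℕ) : Fin n →₀ ℕ :=
  Finsupp.comapDomain Sum.inl e Sum.inl_injective.injOn

/-- the `t`-degree part of an exponent vector. -/
def tdeg (e : (Fin n ⊕ Unit) →₀ ℕ) : ℕ := e (Sum.inr ())

/-- the characteristic vector `α_J` of `J ⊆ [n]`. -/
def chi (J : Finset (Fin n)) : Fin n →₀ ℕ := ∑ j ∈ J, Finsupp.single j 1

/-- build a power series from its coefficient function. -/
def fromFun (f : ((Fin n ⊕ Unit) →₀ ℕ) → ℚ) : MvPowerSeries (Fin n ⊕ Unit) ℚ := f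

lemma emb_apply_inl (α : Fin n →₀ ℕ) (i : ℕ) (j : Fin n) :
    emb α i (Sum.inl j) = α j := by
  simp [emb, Finsupp.mapDomain_apply Sum.inl_injective,
    Finsupp.single_apply]

lemma emb_apply_inr (α : Fin n →₀ ℕ) (i : ℕ) :
    emb α i (Sum.inr ()) = i := by
  rw [emb, Finsupp.add_apply, Finsupp.mapDomain_notin_range _ _ (by simp),
    Finsupp.single_eq_same, zero_add]

lemma emb_add (α β : Fin n →₀ ℕ) (i j : ℕ) :
    emb α i + emb β j = emb (α + β) (i + j) := by
  ext s
  rcases s with s | s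
  · simp [emb_apply_inl]
  · cases s; simp [emb_apply_inr]

lemma sum_emb (J : Finset (Fin n)) :
    ∑ i ∈ J, emb (Finsupp.single i 1) 1 = emb (chi J) J.card := by
  classical
  induction J using Finset.induction with
  | empty =>
      ext s; rcases s with s | s
      · simp [chi, emb_apply_inl]
      · cases s; simp [chi, emb_apply_inr]
  | insert _ _ hx ih =>
      rename_i a s
      rw [Finset.sum_insert hx, ih, emb_add]
      congr 1
      · simp [chi, Finset.sum_insert hx]
      · simp [Finset.card_insert_of_notMem hx, add_comm]

lemma dec_apply (e : (Fin n ⊕ Unit) →₀ ℕ) (j : Fin n) : dec e j = e (Sum.inl j) := rfl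

lemma emb_le_iff (α : Fin n →₀ ℕ) (i : ℕ) (e : (Fin n ⊕ Unit) →₀ ℕ) :
    emb α i ≤ e ↔ α ≤ dec e ∧ i ≤ tdeg e := by
  constructor
  · intro h
    rw [Finsupp.le_def] at h
    refine ⟨Finsupp.le_def.2 fun j => ?_, ?_⟩
    · have := h (Sum.inl j); rwa [emb_apply_inl] at this
    · have := h (Sum.inr ()); rwa [emb_apply_inr] at this
  · rintro ⟨h1, h2⟩
    rw [Finsupp.le_def]
    rintro (s | s)
    · rw [emb_apply_inl]; exact Finsupp.le_def.1 h1 s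
    · cases s; rw [emb_apply_inr]; exact h2

lemma dec_sub_emb (α : Fin n →₀ ℕ) (i : ℕ) (e : (Fin n ⊕ Unit) →₀ ℕ) :
    dec (e - emb α i) = dec e - α := by
  ext j
  rw [dec_apply, Finsupp.tsub_apply, Finsupp.tsub_apply, dec_apply, emb_apply_inl]

lemma tdeg_sub_emb (α : Fin n →₀ ℕ) (i : ℕ) (e : (Fin n ⊕ Unit) →₀ ℕ) :
    tdeg (e - emb α i) = tdeg e - i := by
  show (e - emb α i) (Sum.inr ()) = _
  rw [Finsupp.tsub_apply, emb_apply_inr]; rfl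

lemma monomial_prod (J : Finset (Fin n)) (d : Fin n → ((Fin n ⊕ Unit) →₀ ℕ)) :
    ∏ i ∈ J, MvPowerSeries.monomial (R := ℚ) (d i) 1
      = MvPowerSeries.monomial (R := ℚ) (∑ i ∈ J, d i) 1 := by
  classical
  induction J using Finset.induction with
  | empty => simp [MvPowerSeries.monomial_zero_one]
  | insert _ _ hx ih =>
      rename_i a s
      rw [Finset.prod_insert hx, ih, MvPowerSeries.monomial_mul_monomial,
        Finset.sum_insert hx, one_mul]

theorem poincare_series_of_conjectureP
    (U : Type) (mdeg : U → Fin n →₀ ℕ) (hdeg : U → ℕ)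
    (hfin : ∀ (α : Fin n →₀ ℕ) (i : ℕ), {u : U | mdeg u = α ∧ hdeg u = i}.Finite)
    -- `T i α = dim_k Tor_i^A(k,k)_α`
    (T : ℕ → (Fin n →₀ ℕ) → ℕ)
    -- Conjecture (P):
    (hT : ∀ i α, T i α = Nat.card
      {p : Finset (Fin n) × U // p.1.card + hdeg p.2 = i ∧ chi p.1 + mdeg p.2 = α}) :
    -- the Poincaré–Betti series  Σ T i α x^α t^i …
    fromFun (fun e => (T (tdeg e) (dec e) : ℚ)) =
      -- … equals  Π (1 + x_i t) · Hilb_R(x,1,t)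
      (∏ i : Fin n, (1 + MvPowerSeries.monomial (R := ℚ) (emb (Finsupp.single i 1) 1) 1)) *
        fromFun (fun e => (Nat.card {u : U // mdeg u = dec e ∧ hdeg u = tdeg e} : ℚ)) := by
  classical
  -- expand the product
  have hprod : (∏ i : Fin n, (1 + MvPowerSeries.monomial (R := ℚ) (emb (Finsupp.single i 1) 1) 1))
      = ∑ J : Finset (Fin n), MvPowerSeries.monomial (R := ℚ) (emb (chi J) J.card) 1 := by
    have := Finset.prod_add (fun i : Fin n => MvPowerSeries.monomial (R := ℚ) (emb (Finsupp.single i 1) 1) 1)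
      (fun _ => (1 : MvPowerSeries (Fin n ⊕ Unit) ℚ)) Finset.univ
    simp only [Finset.prod_const_one, mul_one, Finset.powerset_univ] at this
    calc (∏ i : Fin n, (1 + MvPowerSeries.monomial (R := ℚ) (emb (Finsupp.single i 1) 1) 1))
        = ∏ i : Fin n, (MvPowerSeries.monomial (R := ℚ) (emb (Finsupp.single i 1) 1) 1 + 1) := by
          simp [add_comm]
      _ = ∑ J : Finset (Fin n), ∏ i ∈ J, MvPowerSeries.monomial (R := ℚ) (emb (Finsupp.single i 1) 1) 1 :=
          this
      _ = ∑ J : Finset (Fin n), MvPowerSeries.monomial (R := ℚ) (emb (chi J) J.card) 1 := by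
          refine Finset.sum_congr rfl fun J _ => ?_
          rw [monomial_prod, sum_emb]
  rw [hprod]
  apply MvPowerSeries.ext
  intro e
  rw [Finset.sum_mul, map_sum]
  simp only [MvPowerSeries.coeff_monomial_mul, one_mul]
  rw [MvPowerSeries.coeff_apply]
  simp only [MvPowerSeries.coeff_apply]
  show (T (tdeg e) (dec e) : ℚ) = _
  -- turn the RHS into a cast of a natural number sum
  have : ∀ J : Finset (Fin n),
      (if emb (chi J) J.card ≤ e then
          fromFun (fun e => (Nat.card {u : U // mdeg u = dec e ∧ hdeg u = tdeg e} : ℚ))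
            (e - emb (chi J) J.card) else 0)
      = ((if chi J ≤ dec e ∧ J.card ≤ tdeg e then
          Nat.card {u : U // mdeg u = dec e - chi J ∧ hdeg u = tdeg e - J.card} else 0 : ℕ) : ℚ) := by
    intro J
    simp only [emb_le_iff]
    split
    · show fromFun _ _ = _
      rw [show fromFun (fun e => (Nat.card {u : U // mdeg u = dec e ∧ hdeg u = tdeg e} : ℚ))
            (e - emb (chi J) J.card)
          = (Nat.card {u : U // mdeg u = dec (e - emb (chi J) J.card)
              ∧ hdeg u = tdeg (e - emb (chi J) J.card)} : ℚ) from rfl,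
        dec_sub_emb, tdeg_sub_emb]
    · simp
  rw [Finset.sum_congr rfl fun J _ => this J, ← Nat.cast_sum]
  norm_cast
  rw [hT]
  -- now a purely combinatorial counting statement
  set i := tdeg e
  set α := dec e
  -- finiteness of the fibers
  have hfib : ∀ J : Finset (Fin n),
      Finite {u : U // J.card + hdeg u = i ∧ chi J + mdeg u = α} := by
    intro J
    have hsub : {u : U | J.card + hdeg u = i ∧ chi J + mdeg u = α}
        ⊆ {u : U | mdeg u = α - chi J ∧ hdeg u = i - J.card} := by
      rintro u ⟨h1, h2⟩
      constructor
      · exact eq_tsub_of_add_eq (by rwa [add_comm] at h2)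
      · omega
    exact ((hfin _ _).subset hsub).to_subtype
  -- decompose the pairs into a sigma type
  have hequiv : {p : Finset (Fin n) × U // p.1.card + hdeg p.2 = i ∧ chi p.1 + mdeg p.2 = α}
      ≃ Σ J : Finset (Fin n), {u : U // J.card + hdeg u = i ∧ chi J + mdeg u = α} :=
    Equiv.subtypeProdEquivSigmaSubtype (fun (J : Finset (Fin n)) (u : U) =>
      J.card + hdeg u = i ∧ chi J + mdeg u = α)
  rw [Nat.card_congr hequiv]
  haveI : ∀ J : Finset (Fin n),
      Fintype {u : U // J.card + hdeg u = i ∧ chi J + mdeg u = α} := fun J =>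
    @Fintype.ofFinite _ (hfib J)
  rw [Nat.card_eq_fintype_card, Fintype.card_sigma]
  refine Finset.sum_congr rfl fun J _ => ?_
  rw [← Nat.card_eq_fintype_card]
  by_cases h : chi J ≤ α ∧ J.card ≤ i
  · rw [if_pos h]
    refine Nat.card_congr (Equiv.subtypeEquivRight fun u => ?_)
    constructor
    · rintro ⟨h1, h2⟩
      exact ⟨eq_tsub_of_add_eq (by rwa [add_comm] at h2), by omega⟩
    · rintro ⟨h1, h2⟩
      constructor
      · omega
      · rw [h1, add_tsub_cancel_of_le h.1]
  · rw [if_neg h]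
    have : IsEmpty {u : U // J.card + hdeg u = i ∧ chi J + mdeg u = α} := by
      constructor
      rintro ⟨u, h1, h2⟩
      apply h
      constructor
      · rw [← h2]; exact le_add_right (le_refl _)
      · omega
    exact Nat.card_of_isEmpty
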